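/- arXiv:1010.3399 — 3 statements merged into one kernel-verified Lean document; each statement's English description precedes it below -/
import Mathlib

section
/- Let A and B be finite-dimensional, commutative, associative, unital ℝ-algebras, each a local ring with maximal ideals m_A and m_B respectively, both of codimension 1 over ℝ. Then the tensor product A ⊗_ℝ B is again a finite-dimensional local ℝ-algebra whose maximal ideal is m_{A⊗B} = m_A ⊗ B + A ⊗ m_B (i.e., the ideal of A ⊗_ℝ B generated by the images of m_A under a ↦ a ⊗ 1 and of m_B under b ↦ 1 ⊗ b), and this maximal ideal has codimension 1 over ℝ. -/
set_option maxHeartbeats 1000000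

open TensorProduct IsLocalRing

lemma exists_char (A : Type*) [CommRing A] [Algebra ℝ A] [FiniteDimensional ℝ A]
    [IsLocalRing A] (hA : Module.finrank ℝ (A ⧸ maximalIdeal A) = 1) :
    ∃ χ : A →ₐ[ℝ] ℝ, ∀ a : A, a - algebraMap ℝ A (χ a) ∈ maximalIdeal A := by
  set Q := A ⧸ maximalIdeal A
  have hinj : Function.Injective ((Algebra.ofId ℝ Q).toLinearMap) :=
    (algebraMap ℝ Q).injective
  have hsurj : Function.Surjective ((Algebra.ofId ℝ Q).toLinearMap) := by
    rw [← LinearMap.injective_iff_surjective_of_finrank_eq_finrank (by rw [Module.finrank_self]; exact hA.symm)]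
    exact hinj
  let e : ℝ ≃ₐ[ℝ] Q := AlgEquiv.ofBijective (Algebra.ofId ℝ Q) ⟨hinj, hsurj⟩
  refine ⟨e.symm.toAlgHom.comp (Ideal.Quotient.mkₐ ℝ (maximalIdeal A)), fun a => ?_⟩
  have : Ideal.Quotient.mk (maximalIdeal A) (a - algebraMap ℝ A
      (e.symm (Ideal.Quotient.mk (maximalIdeal A) a))) = 0 := by
    have h2 : algebraMap ℝ Q (e.symm (Ideal.Quotient.mk (maximalIdeal A) a))
        = Ideal.Quotient.mk (maximalIdeal A) a := e.apply_symm_apply _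
    simp only [map_sub]
    rw [show Ideal.Quotient.mk (maximalIdeal A) (algebraMap ℝ A
      (e.symm (Ideal.Quotient.mk (maximalIdeal A) a))) = algebraMap ℝ Q
      (e.symm (Ideal.Quotient.mk (maximalIdeal A) a)) from rfl, h2, sub_self]
  rw [← Ideal.Quotient.eq_zero_iff_mem]; exact this

lemma nilp_max (A : Type*) [CommRing A] [Algebra ℝ A] [FiniteDimensional ℝ A]
    [IsLocalRing A] {a : A} (ha : a ∈ maximalIdeal A) : IsNilpotent a := by
  have : IsArtinianRing A := isArtinian_of_tower ℝ inferInstance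
  obtain ⟨n, hn⟩ := IsArtinianRing.isNilpotent_jacobson_bot (R := A)
  rw [IsLocalRing.jacobson_eq_maximalIdeal ⊥ bot_ne_top] at hn
  exact ⟨n, by simpa [hn] using Ideal.pow_mem_pow ha n⟩

open TensorProduct in
/-- The tensor product of two Weil algebras is a Weil algebra, with maximal
ideal `m_A ⊗ B + A ⊗ m_B` of codimension 1 over ℝ. -/
theorem weil_algebra_tensorProduct
    (A B : Type*) [CommRing A] [Algebra ℝ A] [FiniteDimensional ℝ A]
    [CommRing B] [Algebra ℝ B] [FiniteDimensional ℝ B]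
    [IsLocalRing A] [IsLocalRing B]
    (hA : Module.finrank ℝ (A ⧸ IsLocalRing.maximalIdeal A) = 1)
    (hB : Module.finrank ℝ (B ⧸ IsLocalRing.maximalIdeal B) = 1)
    (m : Ideal (A ⊗[ℝ] B))
    (hm : m = (IsLocalRing.maximalIdeal A).map
          (Algebra.TensorProduct.includeLeft : A →ₐ[ℝ] A ⊗[ℝ] B) ⊔
        (IsLocalRing.maximalIdeal B).map
          (Algebra.TensorProduct.includeRight : B →ₐ[ℝ] A ⊗[ℝ] B)) :
    FiniteDimensional ℝ (A ⊗[ℝ] B) ∧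
      IsLocalRing (A ⊗[ℝ] B) ∧
      m.IsMaximal ∧
      Module.finrank ℝ ((A ⊗[ℝ] B) ⧸ m) = 1 := by
  obtain ⟨χA, hχA⟩ := exists_char A hA
  obtain ⟨χB, hχB⟩ := exists_char B hB
  -- the character on the tensor product
  let φ : A ⊗[ℝ] B →ₐ[ℝ] ℝ :=
    Algebra.TensorProduct.lift χA χB (fun a b => Commute.all _ _)
  have hφL : ∀ a : A, φ (a ⊗ₜ[ℝ] 1) = χA a := by
    intro a; simp [φ, Algebra.TensorProduct.lift_tmul]
  have hφR : ∀ b : B, φ ((1 : A) ⊗ₜ[ℝ] b) = χB b := by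
    intro b; simp [φ, Algebra.TensorProduct.lift_tmul]
  have hφtmul : ∀ (a : A) (b : B), φ (a ⊗ₜ[ℝ] b) = χA a * χB b := by
    intro a b; simp [φ, Algebra.TensorProduct.lift_tmul]
  -- membership of generators in m
  have hmemL : ∀ a : A, a ∈ maximalIdeal A → (a ⊗ₜ[ℝ] (1 : B)) ∈ m := by
    intro a ha
    rw [hm]
    exact Ideal.mem_sup_left (Ideal.mem_map_of_mem _ ha)
  have hmemR : ∀ b : B, b ∈ maximalIdeal B → ((1 : A) ⊗ₜ[ℝ] b) ∈ m := by
    intro b hb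
    rw [hm]
    exact Ideal.mem_sup_right (Ideal.mem_map_of_mem _ hb)
  -- key: x - φ x ∈ m for all x
  have key : ∀ x : A ⊗[ℝ] B, x - algebraMap ℝ (A ⊗[ℝ] B) (φ x) ∈ m := by
    intro x
    induction x using TensorProduct.induction_on with
    | zero => simpa using m.zero_mem
    | tmul a b =>
      have hsc : algebraMap ℝ (A ⊗[ℝ] B) (χA a * χB b)
          = (algebraMap ℝ A (χA a)) ⊗ₜ[ℝ] (algebraMap ℝ B (χB b)) := by
        rw [map_mul, Algebra.TensorProduct.algebraMap_apply,
          show (algebraMap ℝ (A ⊗[ℝ] B)) (χB b) = (1 : A) ⊗ₜ[ℝ] algebraMap ℝ B (χB b) from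
            (Algebra.TensorProduct.includeRight.commutes (χB b)).symm,
          Algebra.TensorProduct.tmul_mul_tmul, mul_one, one_mul]
      have hid : a ⊗ₜ[ℝ] b - algebraMap ℝ (A ⊗[ℝ] B) (χA a * χB b) =
          ((a - algebraMap ℝ A (χA a)) ⊗ₜ[ℝ] b) +
          ((algebraMap ℝ A (χA a)) ⊗ₜ[ℝ] (b - algebraMap ℝ B (χB b))) := by
        rw [hsc, TensorProduct.sub_tmul, TensorProduct.tmul_sub]
        abel
      have m1 : ((a - algebraMap ℝ A (χA a)) ⊗ₜ[ℝ] b) ∈ m := by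
        rw [show (a - algebraMap ℝ A (χA a)) ⊗ₜ[ℝ] b
            = ((a - algebraMap ℝ A (χA a)) ⊗ₜ[ℝ] (1 : B)) * ((1 : A) ⊗ₜ[ℝ] b) by
          rw [Algebra.TensorProduct.tmul_mul_tmul, mul_one, one_mul]]
        exact m.mul_mem_right _ (hmemL _ (hχA a))
      have m2 : ((algebraMap ℝ A (χA a)) ⊗ₜ[ℝ] (b - algebraMap ℝ B (χB b))) ∈ m := by
        rw [show (algebraMap ℝ A (χA a)) ⊗ₜ[ℝ] (b - algebraMap ℝ B (χB b))
            = ((algebraMap ℝ A (χA a)) ⊗ₜ[ℝ] (1 : B)) *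
              ((1 : A) ⊗ₜ[ℝ] (b - algebraMap ℝ B (χB b))) by
          rw [Algebra.TensorProduct.tmul_mul_tmul, mul_one, one_mul]]
        exact m.mul_mem_left _ (hmemR _ (hχB b))
      rw [hφtmul, hid]
      exact m.add_mem m1 m2
    | add x y hx hy =>
      have : (x + y) - algebraMap ℝ (A ⊗[ℝ] B) (φ (x + y)) =
          (x - algebraMap ℝ (A ⊗[ℝ] B) (φ x)) + (y - algebraMap ℝ (A ⊗[ℝ] B) (φ y)) := by
        rw [map_add, map_add]; ring
      rw [this]; exact m.add_mem hx hy
  -- m = ker φ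
  have hker : m = RingHom.ker φ := by
    apply le_antisymm
    · rw [hm, sup_le_iff]
      constructor
      · rw [Ideal.map_le_iff_le_comap]
        intro a ha
        have h0 : χA a = 0 := by
          by_contra h
          have : algebraMap ℝ A (χA a) ∈ maximalIdeal A := by
            have := (maximalIdeal A).sub_mem ha (hχA a)
            simpa using this
          exact (IsLocalRing.maximalIdeal.isMaximal A).ne_top
            (Ideal.eq_top_of_isUnit_mem _ this ((isUnit_map_iff _ _).mpr (isUnit_iff_ne_zero.mpr h)))
        simp only [Ideal.mem_comap, RingHom.mem_ker, AlgHom.toRingHom_eq_coe,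
          RingHom.coe_coe]
        rw [show (Algebra.TensorProduct.includeLeft (S := ℝ) a : A ⊗[ℝ] B) = a ⊗ₜ[ℝ] 1 from rfl,
          hφL, h0]
      · rw [Ideal.map_le_iff_le_comap]
        intro b hb
        have h0 : χB b = 0 := by
          by_contra h
          have : algebraMap ℝ B (χB b) ∈ maximalIdeal B := by
            have := (maximalIdeal B).sub_mem hb (hχB b)
            simpa using this
          exact (IsLocalRing.maximalIdeal.isMaximal B).ne_top
            (Ideal.eq_top_of_isUnit_mem _ this ((isUnit_map_iff _ _).mpr (isUnit_iff_ne_zero.mpr h)))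
        simp only [Ideal.mem_comap, RingHom.mem_ker, AlgHom.toRingHom_eq_coe,
          RingHom.coe_coe]
        rw [show (Algebra.TensorProduct.includeRight (R := ℝ) b : A ⊗[ℝ] B) = 1 ⊗ₜ[ℝ] b from rfl,
          hφR, h0]
    · intro x hx
      have hx0 : φ x = 0 := hx
      have := key x
      rwa [hx0, map_zero, sub_zero] at this
  have hsurjφ : Function.Surjective φ := fun r =>
    ⟨algebraMap ℝ (A ⊗[ℝ] B) r, (φ.commutes r).trans (by simp)⟩
  -- maximality
  have hmax : m.IsMaximal := by
    rw [hker]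
    exact RingHom.ker_isMaximal_of_surjective φ hsurjφ
  -- finrank of quotient
  have hfr : Module.finrank ℝ ((A ⊗[ℝ] B) ⧸ m) = 1 := by
    have e : ((A ⊗[ℝ] B) ⧸ m) ≃ₐ[ℝ] ℝ := by
      rw [hker]
      exact Ideal.quotientKerAlgEquivOfSurjective hsurjφ
    rw [e.toLinearEquiv.finrank_eq, Module.finrank_self]
  -- nontriviality
  have : Nontrivial (A ⊗[ℝ] B) := by
    refine ⟨1, 0, fun h => ?_⟩
    have := congrArg φ h
    simp at this
  refine ⟨inferInstance, ?_, hmax, hfr⟩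
  -- local ring
  apply IsLocalRing.of_isUnit_or_isUnit_one_sub_self
  intro x
  have hnil : ∀ y ∈ m, IsNilpotent y := by
    intro y hy
    rw [hm] at hy
    have hle : (maximalIdeal A).map (Algebra.TensorProduct.includeLeft : A →ₐ[ℝ] A ⊗[ℝ] B) ⊔
        (maximalIdeal B).map (Algebra.TensorProduct.includeRight : B →ₐ[ℝ] A ⊗[ℝ] B)
        ≤ nilradical (A ⊗[ℝ] B) := by
      apply sup_le
      · rw [Ideal.map_le_iff_le_comap]
        intro a ha
        exact (nilp_max A ha).map _
      · rw [Ideal.map_le_iff_le_comap]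
        intro b hb
        exact (nilp_max B hb).map _
    exact hle hy
  by_cases h : φ x = 0
  · right
    have h1 : φ (1 - x) = 1 := by simp [h]
    have : (1 - x) - algebraMap ℝ (A ⊗[ℝ] B) 1 ∈ m := by
      have := key (1 - x); rwa [h1] at this
    have hn : IsNilpotent ((1 - x) - 1) := by
      have := hnil _ this; rwa [map_one] at this
    have h2 := hn.isUnit_add_right_of_commute (isUnit_one) (Commute.all _ _)
    rwa [show (1 : A ⊗[ℝ] B) - x - 1 + 1 = 1 - x by ring] at h2
  · left
    have : x - algebraMap ℝ (A ⊗[ℝ] B) (φ x) ∈ m := key x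
    have hn : IsNilpotent (x - algebraMap ℝ (A ⊗[ℝ] B) (φ x)) := hnil _ this
    have hu : IsUnit (algebraMap ℝ (A ⊗[ℝ] B) (φ x)) :=
      (isUnit_map_iff _ _).mpr (isUnit_iff_ne_zero.mpr h)
    have h2 := hn.isUnit_add_right_of_commute hu (Commute.all _ _)
    rwa [show x - algebraMap ℝ (A ⊗[ℝ] B) (φ x) + algebraMap ℝ (A ⊗[ℝ] B) (φ x) = x
      by ring] at h2
end

section
/- Let A and B be finite-dimensional, commutative, associative, unital local ℝ-algebras with maximal ideals m_A and m_B of codimension 1 over ℝ, of heights h and l respectively (i.e., m_A^h ≠ (0), m_A^{h+1} = (0), m_B^l ≠ (0), m_B^{l+1} = (0)). Then the maximal ideal m_{A⊗B} = m_A ⊗ B + A ⊗ m_B of the local algebra A ⊗_ℝ B satisfies m_{A⊗B}^{h+l} ≠ (0) and m_{A⊗B}^{h+l+1} = (0); that is, A ⊗_ℝ B has height h + l. -/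
open TensorProduct in
private lemma tmul_ne_zero_aux {A B : Type*} [AddCommGroup A] [Module ℝ A]
    [AddCommGroup B] [Module ℝ B] {a : A} {b : B} (ha : a ≠ 0) (hb : b ≠ 0) :
    a ⊗ₜ[ℝ] b ≠ 0 := by
  obtain ⟨φ, hφ⟩ : ∃ φ : Module.Dual ℝ A, φ a ≠ 0 := by
    by_contra hc
    push_neg at hc
    exact ha ((Module.forall_dual_apply_eq_zero_iff ℝ a).mp hc)
  obtain ⟨ψ, hψ⟩ : ∃ ψ : Module.Dual ℝ B, ψ b ≠ 0 := by
    by_contra hc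
    push_neg at hc
    exact hb ((Module.forall_dual_apply_eq_zero_iff ℝ b).mp hc)
  intro hab
  have : (TensorProduct.lid ℝ ℝ) ((TensorProduct.map φ ψ) (a ⊗ₜ[ℝ] b)) = 0 := by
    rw [hab, map_zero]
    exact map_zero (TensorProduct.lid ℝ ℝ).toLinearMap
  simp only [TensorProduct.map_tmul, TensorProduct.lid_tmul, smul_eq_mul] at this
  exact mul_ne_zero hφ hψ this

private lemma sup_pow_eq_bot_aux {R : Type*} [CommRing R] (I J : Ideal R) (a b : ℕ)
    (hI : I ^ (a + 1) = ⊥) (hJ : J ^ (b + 1) = ⊥) : (I ⊔ J) ^ (a + b + 1) = ⊥ := by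
  rw [← Ideal.add_eq_sup, add_pow, Ideal.sum_eq_sup, ← le_bot_iff]
  refine Finset.sup_le fun i hi => ?_
  rcases le_or_gt (a + 1) i with hia | hia
  · have hIi : I ^ i = ⊥ := le_bot_iff.mp (hI ▸ Ideal.pow_le_pow_right hia)
    calc I ^ i * J ^ (a + b + 1 - i) * (a + b + 1).choose i
        ≤ I ^ i * J ^ (a + b + 1 - i) := Ideal.mul_le_left
      _ ≤ I ^ i := Ideal.mul_le_left
      _ = ⊥ := hIi
  
  · have hJi : J ^ (a + b + 1 - i) = ⊥ := by
      have : b + 1 ≤ a + b + 1 - i := by omega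
      exact le_bot_iff.mp (hJ ▸ Ideal.pow_le_pow_right this)
    calc I ^ i * J ^ (a + b + 1 - i) * (a + b + 1).choose i
        ≤ I ^ i * J ^ (a + b + 1 - i) := Ideal.mul_le_left
      _ ≤ J ^ (a + b + 1 - i) := Ideal.mul_le_right
      _ = ⊥ := hJi

open TensorProduct in
/-- Heights add under tensor product of Weil algebras: if `A` has height `h`
and `B` has height `l`, then `A ⊗[ℝ] B` has height `h + l`. -/
theorem weil_algebra_tensorProduct_height
    (A B : Type*) [CommRing A] [Algebra ℝ A] [FiniteDimensional ℝ A]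
    [CommRing B] [Algebra ℝ B] [FiniteDimensional ℝ B]
    [IsLocalRing A] [IsLocalRing B]
    (hA : Module.finrank ℝ (A ⧸ IsLocalRing.maximalIdeal A) = 1)
    (hB : Module.finrank ℝ (B ⧸ IsLocalRing.maximalIdeal B) = 1)
    (h l : ℕ)
    (hAh : IsLocalRing.maximalIdeal A ^ h ≠ ⊥)
    (hAh' : IsLocalRing.maximalIdeal A ^ (h + 1) = ⊥)
    (hBl : IsLocalRing.maximalIdeal B ^ l ≠ ⊥)
    (hBl' : IsLocalRing.maximalIdeal B ^ (l + 1) = ⊥)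
    (m : Ideal (A ⊗[ℝ] B))
    (hm : m = (IsLocalRing.maximalIdeal A).map
          (Algebra.TensorProduct.includeLeft : A →ₐ[ℝ] A ⊗[ℝ] B) ⊔
        (IsLocalRing.maximalIdeal B).map
          (Algebra.TensorProduct.includeRight : B →ₐ[ℝ] A ⊗[ℝ] B)) :
    m ^ (h + l) ≠ ⊥ ∧ m ^ (h + l + 1) = ⊥ := by
  set I := (IsLocalRing.maximalIdeal A).map
      (Algebra.TensorProduct.includeLeft : A →ₐ[ℝ] A ⊗[ℝ] B) with hI
  set J := (IsLocalRing.maximalIdeal B).map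
      (Algebra.TensorProduct.includeRight : B →ₐ[ℝ] A ⊗[ℝ] B) with hJ
  constructor
  · -- nonvanishing
    obtain ⟨a, haMem, ha0⟩ : ∃ a ∈ IsLocalRing.maximalIdeal A ^ h, a ≠ 0 := by
      by_contra hc; push_neg at hc
      exact hAh (le_bot_iff.mp fun x hx => hc x hx)
    obtain ⟨b, hbMem, hb0⟩ : ∃ b ∈ IsLocalRing.maximalIdeal B ^ l, b ≠ 0 := by
      by_contra hc; push_neg at hc
      exact hBl (le_bot_iff.mp fun x hx => hc x hx)
    intro hbot
    have hmemI : (a ⊗ₜ[ℝ] (1 : B)) ∈ I ^ h := by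
      rw [hI, ← Ideal.map_pow]
      exact Ideal.mem_map_of_mem _ haMem
    have hmemJ : ((1 : A) ⊗ₜ[ℝ] b) ∈ J ^ l := by
      rw [hJ, ← Ideal.map_pow]
      exact Ideal.mem_map_of_mem _ hbMem
    have hab : (a ⊗ₜ[ℝ] b) ∈ m ^ (h + l) := by
      have : (a ⊗ₜ[ℝ] (1 : B)) * ((1 : A) ⊗ₜ[ℝ] b) ∈ I ^ h * J ^ l :=
        Ideal.mul_mem_mul hmemI hmemJ
      have h2 : I ^ h * J ^ l ≤ m ^ (h + l) := by
        rw [pow_add]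
        exact Ideal.mul_mono (Ideal.pow_right_mono (hm ▸ le_sup_left) h)
          (Ideal.pow_right_mono (hm ▸ le_sup_right) l)
      have h3 : (a ⊗ₜ[ℝ] (1 : B)) * ((1 : A) ⊗ₜ[ℝ] b) = a ⊗ₜ[ℝ] b := by
        rw [Algebra.TensorProduct.tmul_mul_tmul, mul_one, one_mul]
      exact h2 (h3 ▸ this)
    rw [hbot] at hab
    exact tmul_ne_zero_aux ha0 hb0 (Ideal.mem_bot.mp hab)
  · -- vanishing
    rw [hm]
    have hI' : I ^ (h + 1) = ⊥ := by
      rw [hI, ← Ideal.map_pow, hAh', Ideal.map_bot]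
    have hJ' : J ^ (l + 1) = ⊥ := by
      rw [hJ, ← Ideal.map_pow, hBl', Ideal.map_bot]
    exact sup_pow_eq_bot_aux I J h l hI' hJ'
end

section
/- Let A be a finite-dimensional, commutative, associative, unital local ℝ-algebra with maximal ideal m of codimension 1 over ℝ. Then the map ξ ↦ ξ(id_ℝ) is a bijection from the set of all near points of kind A on the manifold ℝ — i.e., the set of ℝ-algebra homomorphisms ξ : C^∞(ℝ) → A for which there exists x ∈ ℝ with ξ(f) − f(x)·1_A ∈ m for all f ∈ C^∞(ℝ) — onto A. -/
open intervalIntegral MeasureTheory Metric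
open scoped ContDiff

private noncomputable def hadG (f : ℝ → ℝ) (x : ℝ) (k : ℕ) (t : ℝ) : ℝ :=
  ∫ s in (0:ℝ)..1, s ^ k * iteratedDeriv (k+1) f (x + s * (t - x))

private lemma hadG_hasDerivAt {f : ℝ → ℝ} (hf : ContDiff ℝ ∞ f) (x : ℝ) (k : ℕ) (t₀ : ℝ) :
    HasDerivAt (hadG f x k) (hadG f x (k+1) t₀) t₀ := by
  have hcd : ∀ m : ℕ, ContDiff ℝ ∞ (iteratedDeriv m f) := by
    intro m; rw [iteratedDeriv_eq_iterate]; exact hf.iterate_deriv m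
  have hcont : ∀ m : ℕ, Continuous (iteratedDeriv m f) := fun m => (hcd m).continuous
  -- bound on compact set
  obtain ⟨C, hC⟩ : ∃ C, ∀ y ∈ (fun p : ℝ × ℝ => x + p.1 * (p.2 - x)) ''
      (Set.Icc (0:ℝ) 1 ×ˢ closedBall t₀ 1), ‖iteratedDeriv (k+2) f y‖ ≤ C := by
    apply ((isCompact_Icc.prod (isCompact_closedBall t₀ 1)).image (by fun_prop)).exists_bound_of_continuousOn
    exact (hcont (k+2)).continuousOn
  have key := hasDerivAt_integral_of_dominated_loc_of_deriv_le (μ := volume) (a := (0:ℝ)) (b := 1)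
      (F := fun t s => s ^ k * iteratedDeriv (k+1) f (x + s * (t - x)))
      (F' := fun t s => s ^ (k+1) * iteratedDeriv (k+2) f (x + s * (t - x)))
      (x₀ := t₀) (bound := fun _ => max C 0) (Metric.ball_mem_nhds t₀ one_pos)
      (Filter.Eventually.of_forall fun t => (Continuous.aestronglyMeasurable (by fun_prop)))
      (Continuous.intervalIntegrable (by fun_prop) _ _)
      (Continuous.aestronglyMeasurable (by fun_prop))
      ?_ (intervalIntegrable_const) ?_
  · exact key.2
  · refine Filter.Eventually.of_forall fun s hs => fun t ht => ?_
    rw [Set.uIoc_of_le (by norm_num : (0:ℝ) ≤ 1)] at hs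
    have h1 : ‖(s:ℝ) ^ (k+1)‖ ≤ 1 := by
      rw [Real.norm_eq_abs, abs_pow]
      exact pow_le_one₀ (abs_nonneg s) (abs_le.2 ⟨by linarith [hs.1], hs.2⟩)
    have h2 : ‖iteratedDeriv (k+2) f (x + s * (t - x))‖ ≤ max C 0 := by
      refine le_trans (hC _ ⟨(s, t), ⟨⟨le_of_lt hs.1, hs.2⟩, ball_subset_closedBall ht⟩, rfl⟩) (le_max_left _ _)
      
    calc ‖s ^ (k+1) * iteratedDeriv (k+2) f (x + s * (t - x))‖
        = ‖(s:ℝ) ^ (k+1)‖ * ‖iteratedDeriv (k+2) f (x + s * (t - x))‖ := norm_mul _ _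
      _ ≤ 1 * max C 0 := mul_le_mul h1 h2 (norm_nonneg _) zero_le_one
      _ = max C 0 := one_mul _
  · refine Filter.Eventually.of_forall fun s _ => fun t _ => ?_
    have hinner : HasDerivAt (fun t : ℝ => x + s * (t - x)) s t := by
      simpa using (((hasDerivAt_id t).sub_const x).const_mul s).const_add x
    have hu : HasDerivAt (iteratedDeriv (k+1) f)
        (iteratedDeriv (k+2) f (x + s * (t - x))) (x + s * (t - x)) := by
      have := ((hcd (k+1)).differentiable (by norm_num)).differentiableAt (x := x + s * (t - x))
      simpa [iteratedDeriv_succ] using this.hasDerivAt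
    have := (hu.comp t hinner).const_mul ((s:ℝ) ^ k)
    rw [show s ^ (k+1) * iteratedDeriv (k+2) f (x + s*(t-x)) = s^k * (iteratedDeriv (k+2) f (x + s*(t-x)) * s) by ring]
    exact this

private lemma hadG_contDiff {f : ℝ → ℝ} (hf : ContDiff ℝ ∞ f) (x : ℝ) (k : ℕ) :
    ContDiff ℝ ∞ (hadG f x k) := by
  suffices h : ∀ n : ℕ, ∀ k, ContDiff ℝ n (hadG f x k) by
    rw [contDiff_infty]; exact fun n => h n k
  intro n
  induction n with
  | zero =>
    intro k
    rw [show ((0:ℕ) : WithTop ℕ∞) = 0 by norm_cast, contDiff_zero]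
    have : Differentiable ℝ (hadG f x k) := fun t => (hadG_hasDerivAt hf x k t).differentiableAt
    exact this.continuous
  | succ n ih =>
    intro k
    rw [show ((n+1 : ℕ) : WithTop ℕ∞) = (n : WithTop ℕ∞) + 1 by push_cast; rfl,
      contDiff_succ_iff_deriv]
    refine ⟨fun t => (hadG_hasDerivAt hf x k t).differentiableAt, by simp, ?_⟩
    have hd : deriv (hadG f x k) = hadG f x (k+1) :=
      funext fun t => (hadG_hasDerivAt hf x k t).deriv
    rw [hd]
    exact ih (k+1)

/-- Smooth first-order Hadamard lemma. -/
private lemma hadamard_step {f : ℝ → ℝ} (hf : ContDiff ℝ ∞ f) (x : ℝ) :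
    ∃ h : ℝ → ℝ, ContDiff ℝ ∞ h ∧ ∀ t, f t = f x + (t - x) * h t := by
  have hdc : Continuous (deriv f) := hf.continuous_deriv (by norm_num)
  refine ⟨hadG f x 0, hadG_contDiff hf x 0, fun t => ?_⟩
  have hderiv : ∀ s ∈ Set.uIcc (0:ℝ) 1,
      HasDerivAt (fun s => f (x + s * (t - x))) ((t - x) * deriv f (x + s * (t - x))) s := by
    intro s _
    have hinner : HasDerivAt (fun s : ℝ => x + s * (t - x)) (t - x) s := by
      simpa using ((hasDerivAt_id s).mul_const (t - x)).const_add x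
    have hdf : HasDerivAt f (deriv f (x + s * (t - x))) (x + s * (t - x)) :=
      ((hf.differentiable (by norm_num)) _).hasDerivAt
    simpa [mul_comm, Function.comp_def] using hdf.comp s hinner
  have hint : IntervalIntegrable (fun s => (t - x) * deriv f (x + s * (t - x))) volume 0 1 :=
    Continuous.intervalIntegrable (by fun_prop) _ _
  have heq := intervalIntegral.integral_eq_sub_of_hasDerivAt hderiv hint
  simp only [one_mul, zero_mul, add_zero, add_sub_cancel] at heq
  have h2 : (t - x) * hadG f x 0 t = f t - f x := by
    rw [hadG]
    simp only [pow_zero, one_mul, zero_add, iteratedDeriv_one]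
    rw [← intervalIntegral.integral_const_mul]
    simpa using heq
  linarith

/-- If a polynomial equals `(t-x)^N * h t` pointwise with `h` continuous, then
`(X - C x)^N` divides it. -/
private lemma poly_dvd_of_eq (x : ℝ) : ∀ (N : ℕ) (P : Polynomial ℝ) (h : ℝ → ℝ),
    Continuous h → (∀ t, P.eval t = (t - x) ^ N * h t) →
    (Polynomial.X - Polynomial.C x) ^ N ∣ P := by
  intro N
  induction N with
  | zero => intro P h _ _; simp
  | succ N ih =>
    intro P h hc hP
    have hroot : P.IsRoot x := by
      have := hP x; simpa [Polynomial.IsRoot] using this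
    obtain ⟨Q, hQ⟩ := (Polynomial.dvd_iff_isRoot.2 hroot)
    have hQeval : ∀ t, Q.eval t = (t - x) ^ N * h t := by
      have heqon : Set.EqOn (fun t => Q.eval t) (fun t => (t - x) ^ N * h t) {x}ᶜ := by
        intro t ht
        have htx : t - x ≠ 0 := sub_ne_zero.2 ht
        have := hP t
        rw [hQ] at this
        simp only [Polynomial.eval_mul, Polynomial.eval_sub, Polynomial.eval_X,
          Polynomial.eval_C, pow_succ] at this ⊢
        have : (t - x) * Q.eval t = (t - x) * ((t - x) ^ N * h t) := by ring_nf; ring_nf at this; linarith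
        exact mul_left_cancel₀ htx this
      have := Continuous.ext_on (dense_compl_singleton x)
        (by fun_prop) (by fun_prop) heqon
      exact fun t => congrFun this t
    obtain ⟨R, hR⟩ := ih Q h hc hQeval
    exact ⟨R, by rw [hQ, hR]; ring⟩

open Manifold Polynomial in
private lemma hadamard_chain (F : C^(⊤ : ℕ∞)⟮𝓘(ℝ, ℝ), ℝ; 𝓘(ℝ, ℝ), ℝ⟯) (x : ℝ) (N : ℕ) :
    ∃ (P : Polynomial ℝ) (g : C^(⊤ : ℕ∞)⟮𝓘(ℝ, ℝ), ℝ; 𝓘(ℝ, ℝ), ℝ⟯),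
      F = aeval (ContMDiffMap.id) P +
        ((ContMDiffMap.id : C^(⊤ : ℕ∞)⟮𝓘(ℝ, ℝ), ℝ; 𝓘(ℝ, ℝ), ℝ⟯) - algebraMap ℝ _ x) ^ N * g := by
  induction N with
  | zero => exact ⟨0, F, by simp⟩
  | succ N ih =>
    obtain ⟨P, g, hF⟩ := ih
    obtain ⟨h, hh, hgh⟩ := hadamard_step (g.contMDiff.contDiff) x
    set c := g x with hc
    refine ⟨P + C c * (X - C x) ^ N, ⟨h, hh.contMDiff⟩, ?_⟩
    have hg : g = algebraMap ℝ _ c +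
        ((ContMDiffMap.id : C^(⊤ : ℕ∞)⟮𝓘(ℝ, ℝ), ℝ; 𝓘(ℝ, ℝ), ℝ⟯) - algebraMap ℝ _ x) *
          ⟨h, hh.contMDiff⟩ := by
      refine DFunLike.ext _ _ fun t => ?_
      show g t = g x + (t - x) * h t
      exact hgh t
    rw [hF, map_add, map_mul, map_pow, map_sub, aeval_X, aeval_C, aeval_C]
    conv_lhs => rw [hg]
    obtain ⟨H, hH⟩ : ∃ H : C^(⊤ : ℕ∞)⟮𝓘(ℝ, ℝ), ℝ; 𝓘(ℝ, ℝ), ℝ⟯, H = ⟨h, hh.contMDiff⟩ := ⟨_, rfl⟩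
    rw [← hH]
    ring

private lemma max_pow_eq_bot (A : Type*) [CommRing A] [Algebra ℝ A] [FiniteDimensional ℝ A]
    [IsLocalRing A] : ∃ N : ℕ, (IsLocalRing.maximalIdeal A) ^ (N + 1) = ⊥ := by
  have : IsArtinianRing A := isArtinian_of_tower ℝ inferInstance
  obtain ⟨N, hN⟩ := IsArtinianRing.isNilpotent_jacobson_bot (R := A)
  rw [IsLocalRing.jacobson_eq_maximalIdeal ⊥ bot_ne_top] at hN
  refine ⟨N, ?_⟩
  rw [pow_succ]
  rw [show ((IsLocalRing.maximalIdeal A) ^ N : Ideal A) = ⊥ from hN]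
  simp

private lemma scalar_eq_zero_of_mem (A : Type*) [CommRing A] [Algebra ℝ A]
    [IsLocalRing A] {x : ℝ} (hx : algebraMap ℝ A x ∈ IsLocalRing.maximalIdeal A) : x = 0 := by
  by_contra h
  exact (IsLocalRing.mem_maximalIdeal _).1 hx ((isUnit_iff_ne_zero.2 h).map (algebraMap ℝ A))

private lemma exists_scalar (A : Type*) [CommRing A] [Algebra ℝ A] [FiniteDimensional ℝ A]
    [IsLocalRing A]
    (hcodim : Module.finrank ℝ (A ⧸ IsLocalRing.maximalIdeal A) = 1) (a : A) :
    ∃ x : ℝ, a - algebraMap ℝ A x ∈ IsLocalRing.maximalIdeal A := by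
  haveI : (IsLocalRing.maximalIdeal A).IsMaximal := IsLocalRing.maximalIdeal.isMaximal A
  set m := IsLocalRing.maximalIdeal A
  have hinj : Function.Injective (Algebra.linearMap ℝ (A ⧸ m)) :=
    (algebraMap ℝ (A ⧸ m)).injective
  have hsurj : Function.Surjective (Algebra.linearMap ℝ (A ⧸ m)) := by
    have := LinearMap.injective_iff_surjective_of_finrank_eq_finrank
      (f := Algebra.linearMap ℝ (A ⧸ m)) (by rw [hcodim, Module.finrank_self])
    exact this.1 hinj
  obtain ⟨x, hx⟩ := hsurj (Ideal.Quotient.mk m a)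
  refine ⟨x, ?_⟩
  rw [← Ideal.Quotient.eq_zero_iff_mem, map_sub]
  have : (Ideal.Quotient.mk m) (algebraMap ℝ A x) = algebraMap ℝ (A ⧸ m) x :=
    ((Ideal.Quotient.mkₐ ℝ m).commutes x)
  rw [this, ← hx]
  simp [Algebra.linearMap_apply]

open Manifold in
private abbrev SmR : Type := C^(⊤ : ℕ∞)⟮𝓘(ℝ, ℝ), ℝ; 𝓘(ℝ, ℝ), ℝ⟯

private noncomputable def evSm (t : ℝ) : SmR →ₐ[ℝ] ℝ :=
  (Pi.evalAlgHom ℝ (fun _ => ℝ) t).comp ContMDiffMap.coeFnAlgHom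

private lemma evSm_apply (t : ℝ) (f : SmR) : evSm t f = f t := rfl

open Polynomial in
private lemma evSm_decomp (t x : ℝ) (P : Polynomial ℝ) (M : ℕ) (g : SmR) :
    (aeval (ContMDiffMap.id : SmR) P + ((ContMDiffMap.id : SmR) - algebraMap ℝ _ x) ^ M * g) t
      = P.eval t + (t - x) ^ M * g t := by
  have : (aeval (ContMDiffMap.id : SmR) P +
      ((ContMDiffMap.id : SmR) - algebraMap ℝ _ x) ^ M * g) t =
      evSm t (aeval (ContMDiffMap.id : SmR) P +
        ((ContMDiffMap.id : SmR) - algebraMap ℝ _ x) ^ M * g) := rfl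
  rw [this, map_add, map_mul, map_pow, map_sub, AlgHom.commutes,
    ← aeval_algHom_apply, coe_aeval_eq_eval]
  rfl

open Polynomial in
private lemma compare (x : ℝ) (M : ℕ) {P₁ P₂ : Polynomial ℝ} {g₁ g₂ : SmR}
    (hEq : aeval (ContMDiffMap.id : SmR) P₁ + ((ContMDiffMap.id : SmR) - algebraMap ℝ _ x) ^ M * g₁
      = aeval (ContMDiffMap.id : SmR) P₂ +
        ((ContMDiffMap.id : SmR) - algebraMap ℝ _ x) ^ M * g₂) :
    (X - C x) ^ M ∣ (P₁ - P₂) := by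
  apply poly_dvd_of_eq x M (P₁ - P₂) (fun t => g₂ t - g₁ t)
  · have h1 : Continuous g₁ := g₁.contMDiff.contDiff.continuous
    have h2 : Continuous g₂ := g₂.contMDiff.contDiff.continuous
    fun_prop
  · intro t
    have := congrArg (fun F : SmR => F t) hEq
    simp only [evSm_decomp] at this
    simp only [Polynomial.eval_sub]
    ring_nf
    ring_nf at this
    linarith

open Polynomial



open Manifold in
/-- For a Weil algebra `A`, evaluation at `id_ℝ` is a bijection from the set of
near points of kind `A` on the manifold `ℝ` onto `A`. -/
theorem nearPoints_of_real_equiv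
    (A : Type*) [CommRing A] [Algebra ℝ A] [FiniteDimensional ℝ A]
    [IsLocalRing A]
    (hcodim : Module.finrank ℝ (A ⧸ IsLocalRing.maximalIdeal A) = 1) :
    Function.Bijective
      (fun ξ : {ξ : C^(⊤ : ℕ∞)⟮𝓘(ℝ, ℝ), ℝ; 𝓘(ℝ, ℝ), ℝ⟯ →ₐ[ℝ] A //
          ∃ x : ℝ, ∀ f : C^(⊤ : ℕ∞)⟮𝓘(ℝ, ℝ), ℝ; 𝓘(ℝ, ℝ), ℝ⟯,
            ξ f - algebraMap ℝ A (f x) ∈ IsLocalRing.maximalIdeal A} =>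
        ξ.1 (ContMDiffMap.id : C^(⊤ : ℕ∞)⟮𝓘(ℝ, ℝ), ℝ; 𝓘(ℝ, ℝ), ℝ⟯)) := by
  obtain ⟨N, hN⟩ := max_pow_eq_bot A
  have hpow : ∀ b : A, b ∈ IsLocalRing.maximalIdeal A → b ^ (N+1) = 0 := by
    intro b hb
    have := Ideal.pow_mem_pow hb (N+1)
    rw [hN] at this
    simpa using this
  have hid : ∀ (ξ : SmR →ₐ[ℝ] A) (x : ℝ),
      (∀ f : SmR, ξ f - algebraMap ℝ A (f x) ∈ IsLocalRing.maximalIdeal A) →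
      ξ ContMDiffMap.id - algebraMap ℝ A x ∈ IsLocalRing.maximalIdeal A := by
    intro ξ x hξ
    exact hξ ContMDiffMap.id
  constructor
  · rintro ⟨ξ₁, x₁, hξ₁⟩ ⟨ξ₂, x₂, hξ₂⟩ hval
    dsimp only at hval
    have hx12 : x₁ = x₂ := by
      have h1 := hid ξ₁ x₁ hξ₁
      have h2 := hid ξ₂ x₂ hξ₂
      rw [← hval] at h2
      have h3 : algebraMap ℝ A (x₂ - x₁) ∈ IsLocalRing.maximalIdeal A := by
        rw [map_sub]
        have := sub_mem h1 h2
        have heq : ξ₁ ContMDiffMap.id - algebraMap ℝ A x₁ -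
            (ξ₁ ContMDiffMap.id - algebraMap ℝ A x₂)
            = algebraMap ℝ A x₂ - algebraMap ℝ A x₁ := by ring
        rwa [heq] at this
      have := scalar_eq_zero_of_mem A h3
      linarith
    refine Subtype.ext (AlgHom.ext fun f => ?_)
    obtain ⟨P, g, hPg⟩ := hadamard_chain f x₁ (N+1)
    have key : ∀ (ξ : SmR →ₐ[ℝ] A),
        (∀ f : SmR, ξ f - algebraMap ℝ A (f x₁) ∈ IsLocalRing.maximalIdeal A) →
        ξ f = aeval (ξ ContMDiffMap.id) P := by
      intro ξ hξ
      rw [hPg, map_add, map_mul, map_pow, map_sub, AlgHom.commutes]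
      rw [hpow _ (hid ξ x₁ hξ), zero_mul, add_zero, aeval_algHom_apply]
    rw [key ξ₁ hξ₁, key ξ₂ (hx12.symm ▸ hξ₂), hval]
  · intro a
    obtain ⟨x, hx⟩ := exists_scalar A hcodim a
    have hn : (a - algebraMap ℝ A x) ^ (N+1) = 0 := hpow _ hx
    choose Pf gf hPg using fun F : SmR => hadamard_chain F x (N+1)
    have W : ∀ (F : SmR) (P : Polynomial ℝ) (g : SmR),
        F = aeval (ContMDiffMap.id : SmR) P +
          ((ContMDiffMap.id : SmR) - algebraMap ℝ _ x) ^ (N+1) * g →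
        aeval a (Pf F) = aeval a P := by
      intro F P g h
      obtain ⟨Q, hQ⟩ := compare x (N+1) ((hPg F).symm.trans h)
      have h2 : aeval a (Pf F) - aeval a P = 0 := by
        rw [← map_sub, hQ, map_mul, map_pow, map_sub, aeval_X, aeval_C, hn, zero_mul]
      exact sub_eq_zero.1 h2
    let ξ₀ : SmR →ₐ[ℝ] A :=
             { toFun := fun F => aeval a (Pf F)
               map_one' := by show aeval a (Pf 1) = 1; rw [W 1 1 0 (by simp), map_one]
               map_mul' := fun F G => by
                 have hdec : F * G = aeval (ContMDiffMap.id : SmR) (Pf F * Pf G) +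
                     ((ContMDiffMap.id : SmR) - algebraMap ℝ _ x) ^ (N+1) *
                       (aeval (ContMDiffMap.id : SmR) (Pf F) * gf G +
                         gf F * aeval (ContMDiffMap.id : SmR) (Pf G) +
                         ((ContMDiffMap.id : SmR) - algebraMap ℝ _ x) ^ (N+1) *
                           (gf F * gf G)) := by
                   rw [map_mul]
                   conv_lhs => rw [hPg F, hPg G]
                   ring
                 rw [W _ _ _ hdec, map_mul]
               map_zero' := by show aeval a (Pf 0) = 0; rw [W 0 0 0 (by simp), map_zero]
               map_add' := fun F G => by
                 have hdec : F + G = aeval (ContMDiffMap.id : SmR) (Pf F + Pf G) +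
                     ((ContMDiffMap.id : SmR) - algebraMap ℝ _ x) ^ (N+1) * (gf F + gf G) := by
                   rw [map_add]
                   conv_lhs => rw [hPg F, hPg G]
                   ring
                 rw [W _ _ _ hdec, map_add]
               commutes' := fun c => by
                 rw [W (algebraMap ℝ SmR c) (C c) 0 (by simp), aeval_C] }
    have hcoe : ∀ F : SmR, ξ₀ F = aeval a (Pf F) := fun _ => rfl
    refine ⟨⟨ξ₀, x, fun f => ?_⟩, ?_⟩
    · rw [hcoe f]
      have hfx : f x = (Pf f).eval x := by
        conv_lhs => rw [hPg f]
        rw [evSm_decomp]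
        simp
      rw [hfx, ← Ideal.Quotient.eq_zero_iff_mem, map_sub]
      have hmk : Ideal.Quotient.mk (IsLocalRing.maximalIdeal A) a
          = algebraMap ℝ (A ⧸ IsLocalRing.maximalIdeal A) x := by
        have h0 : Ideal.Quotient.mk (IsLocalRing.maximalIdeal A) a -
            Ideal.Quotient.mk (IsLocalRing.maximalIdeal A) (algebraMap ℝ A x) = 0 := by
          rw [← map_sub, Ideal.Quotient.eq_zero_iff_mem]
          exact hx
        have h1 : Ideal.Quotient.mk (IsLocalRing.maximalIdeal A) (algebraMap ℝ A x)
            = algebraMap ℝ (A ⧸ IsLocalRing.maximalIdeal A) x :=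
          (Ideal.Quotient.mkₐ ℝ _).commutes x
        rw [← h1]
        linear_combination h0
      have e1 : Ideal.Quotient.mk (IsLocalRing.maximalIdeal A) (aeval a (Pf f))
          = aeval (Ideal.Quotient.mk (IsLocalRing.maximalIdeal A) a) (Pf f) :=
        (aeval_algHom_apply (Ideal.Quotient.mkₐ ℝ (IsLocalRing.maximalIdeal A)) a (Pf f)).symm
      have e2 : Ideal.Quotient.mk (IsLocalRing.maximalIdeal A) (algebraMap ℝ A ((Pf f).eval x))
          = algebraMap ℝ (A ⧸ IsLocalRing.maximalIdeal A) ((Pf f).eval x) :=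
        (Ideal.Quotient.mkₐ ℝ _).commutes _
      rw [e1, e2, hmk, aeval_algebraMap_apply_eq_algebraMap_eval, sub_self]
    · show ξ₀ ContMDiffMap.id = a
      rw [hcoe, W ContMDiffMap.id X 0 (by simp), aeval_X]
end
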